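/- The probability F̃ = P( Ps·Z > τ(G), log2(1 + τ(G)) < Rs, G > α0 ) equals e^{−α0} − e^{−α1} − Σ_{i=0}^{M} C(M,i)·(−1)^i·e^{i/Ps}·u(α0, α1, i/(Ps·α0)), where C(M,i) is the binomial coefficient. -/

import Mathlib

open MeasureTheory ProbabilityTheory Real

/-- The interference threshold `τ(g) = max{0, g/α₀ − 1}`. -/
noncomputable def tau (α0 g : ℝ) : ℝ := max 0 (g / α0 - 1)

/-- `u(a,b,c) = (e^{−a(c+1)} − e^{−b(c+1)}) / (c+1)`. -/
noncomputable def uFun (a b c : ℝ) : ℝ :=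
  (Real.exp (-a * (c + 1)) - Real.exp (-b * (c + 1))) / (c + 1)

/-- antiderivative computation -/
lemma integral_exp_neg_mul (k a b : ℝ) (hk : 0 < k) :
    ∫ x in a..b, Real.exp (-(k * x)) = (Real.exp (-(k * a)) - Real.exp (-(k * b))) / k := by
  have hder : ∀ x ∈ Set.uIcc a b,
      HasDerivAt (fun y => -Real.exp (-(k * y)) / k) (Real.exp (-(k * x))) x := by
    intro x _
    have h := (hasDerivAt_neg_exp_mul_exp (r := k) (x := x)).div_const k
    simpa [mul_div_assoc, mul_div_cancel_left₀ _ hk.ne'] using h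
  have hint : IntervalIntegrable (fun x => Real.exp (-(k * x))) volume a b := by
    apply Continuous.intervalIntegrable
    continuity
  rw [intervalIntegral.integral_eq_sub_of_hasDerivAt hder hint]
  field_simp
  ring

/-- Iic measure of the rate-1 exponential distribution. -/
lemma expMeasure_Iic (t : ℝ) :
    expMeasure 1 (Set.Iic t) = ENNReal.ofReal (if 0 ≤ t then 1 - Real.exp (-t) else 0) := by
  have h : expMeasure 1 = volume.withDensity (exponentialPDF 1) := rfl
  rw [h, withDensity_apply _ measurableSet_Iic, lintegral_exponentialPDF_eq_antiDeriv one_pos t]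
  simp

lemma exponentialPDFReal_one_of_nonneg {x : ℝ} (hx : 0 ≤ x) :
    exponentialPDFReal 1 x = Real.exp (-x) := by
  unfold exponentialPDFReal gammaPDFReal
  simp [hx, Real.Gamma_one]

/-- binomial expansion of `(1-y)^M`. -/
lemma one_sub_pow_eq (y : ℝ) (M : ℕ) :
    (1 - y) ^ M = ∑ i ∈ Finset.range (M + 1),
      (M.choose i : ℝ) * (-1 : ℝ) ^ i * y ^ i := by
  have h := add_pow (-y) 1 M
  have h1 : (1 : ℝ) - y = -y + 1 := by ring
  rw [h1, h]
  refine Finset.sum_congr rfl fun i _ => ?_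
  rw [neg_pow]
  ring

/-- closed form for the probability `F̃` appearing in the proof of
Theorem 2 for the FSIC-PA scheme. -/
theorem fsic_pa_Ftilde_closed_form
    {Ω : Type*} [MeasurableSpace Ω] (μ : Measure Ω) [IsProbabilityMeasure μ]
    (M : ℕ) (hM : 1 ≤ M)
    (P0 Ps R0 Rs : ℝ) (hP0 : 0 < P0) (hPs : 0 < Ps) (hR0 : 0 < R0) (hRs : 0 < Rs)
    (ε0 εs α0 αs α1 : ℝ)
    (hε0 : ε0 = 2 ^ R0 - 1) (hεs : εs = 2 ^ Rs - 1)
    (hα0 : α0 = ε0 / P0) (hαs : αs = εs / Ps) (hα1 : α1 = (1 + εs) * α0)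
    (G : Ω → ℝ) (H : Fin M → Ω → ℝ)
    (hGmeas : Measurable G) (hHmeas : ∀ m, Measurable (H m))
    (hGnn : ∀ ω, 0 ≤ G ω) (hHnn : ∀ m ω, 0 ≤ H m ω)
    (hGdist : Measure.map G μ = expMeasure 1)
    (hHdist : ∀ m, Measure.map (H m) μ = expMeasure 1)
    (hIndep : iIndepFun
      (Fin.cons G H : Fin (M + 1) → Ω → ℝ) μ)
    (Z : Ω → ℝ) (hZ : ∀ ω, Z ω = ⨆ m : Fin M, H m ω)
    :
    (μ {ω | Ps * Z ω > tau α0 (G ω) ∧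
            Real.logb 2 (1 + tau α0 (G ω)) < Rs ∧ G ω > α0}).toReal =
      Real.exp (-α0) - Real.exp (-α1) -
        ∑ i ∈ Finset.range (M + 1),
          (M.choose i : ℝ) * (-1 : ℝ) ^ i * Real.exp ((i : ℝ) / Ps) *
            uFun α0 α1 ((i : ℝ) / (Ps * α0)) := by
  classical
  haveI : Nonempty (Fin M) := ⟨⟨0, hM⟩⟩
  -- positivity facts
  have hε0pos : 0 < ε0 := by
    rw [hε0]
    have : (1 : ℝ) < 2 ^ R0 := by
      rw [show (1:ℝ) = 2 ^ (0:ℝ) by simp]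
      exact Real.rpow_lt_rpow_left_iff (by norm_num) |>.mpr hR0
    linarith
  have hεspos : 0 < εs := by
    rw [hεs]
    have : (1 : ℝ) < 2 ^ Rs := by
      rw [show (1:ℝ) = 2 ^ (0:ℝ) by simp]
      exact Real.rpow_lt_rpow_left_iff (by norm_num) |>.mpr hRs
    linarith
  have hα0pos : 0 < α0 := by rw [hα0]; positivity
  have hα01 : α0 < α1 := by
    rw [hα1]; nlinarith
  have h2Rs : (2:ℝ) ^ Rs = 1 + εs := by rw [hεs]; ring
  -- measurability of Z
  have hZfun : Z = fun ω => ⨆ m : Fin M, H m ω := funext hZ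
  have hZmeas : Measurable Z := by
    rw [hZfun]; exact Measurable.iSup fun m => hHmeas m
  set ν : Measure ℝ := Measure.map Z μ with hν
  haveI : IsProbabilityMeasure ν := Measure.isProbabilityMeasure_map hZmeas.aemeasurable
  -- the target set
  set S : Set (ℝ × ℝ) :=
    {p : ℝ × ℝ | (α0 < p.1 ∧ p.1 < α1) ∧ (p.1 / α0 - 1) / Ps < p.2} with hS
  have hSmeas : MeasurableSet S := by
    apply MeasurableSet.inter
    · exact ((measurableSet_Ioo (a := α0) (b := α1)).preimage measurable_fst)
    · exact measurableSet_lt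
        (((measurable_fst.div_const α0).sub_const 1).div_const Ps) measurable_snd
  -- event rewrite
  have hsetEq : {ω | Ps * Z ω > tau α0 (G ω) ∧
      Real.logb 2 (1 + tau α0 (G ω)) < Rs ∧ G ω > α0}
      = (fun ω => (G ω, Z ω)) ⁻¹' S := by
    ext ω
    simp only [Set.mem_setOf_eq, Set.mem_preimage, hS]
    constructor
    · rintro ⟨h1, h2, h3⟩
      have hdiv : 1 < G ω / α0 := (one_lt_div hα0pos).mpr h3
      have htau : tau α0 (G ω) = G ω / α0 - 1 := by
        unfold tau; exact max_eq_right (by linarith)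
      rw [htau] at h1 h2
      have h1t : 1 + (G ω / α0 - 1) = G ω / α0 := by ring
      rw [h1t] at h2
      have h2' : G ω / α0 < 2 ^ Rs :=
        (Real.logb_lt_iff_lt_rpow (by norm_num) (by linarith)).mp h2
      rw [h2Rs] at h2'
      have hlt : G ω < α1 := by
        rw [hα1]
        have := (div_lt_iff₀ hα0pos).mp h2'
        linarith
      refine ⟨⟨h3, hlt⟩, ?_⟩
      rw [div_lt_iff₀ hPs]
      linarith [h1]
    · rintro ⟨⟨h3, hlt⟩, h1⟩
      have hdiv : 1 < G ω / α0 := (one_lt_div hα0pos).mpr h3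
      have htau : tau α0 (G ω) = G ω / α0 - 1 := by
        unfold tau; exact max_eq_right (by linarith)
      refine ⟨?_, ?_, h3⟩
      · rw [htau]
        have := (div_lt_iff₀ hPs).mp h1
        linarith
      · rw [htau]
        have h1t : 1 + (G ω / α0 - 1) = G ω / α0 := by ring
        rw [h1t]
        rw [Real.logb_lt_iff_lt_rpow (by norm_num) (by linarith), h2Rs]
        rw [hα1] at hlt
        rw [div_lt_iff₀ hα0pos]
        linarith
  -- independence of G and Z
  set F : Fin (M + 1) → Ω → ℝ := Fin.cons G H with hF
  have hFmeas : ∀ i, Measurable (F i) := by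
    intro i
    refine Fin.cases ?_ ?_ i
    · simpa [hF] using hGmeas
    · intro m; simpa [hF] using hHmeas m
  set T : Finset (Fin (M + 1)) := Finset.univ.image Fin.succ with hT
  have hdisj : Disjoint ({0} : Finset (Fin (M + 1))) T := by
    simp only [Finset.disjoint_left, Finset.mem_singleton, hT, Finset.mem_image]
    rintro a rfl ⟨m, -, hm⟩
    exact (Fin.succ_ne_zero m) hm
  have hGZ : IndepFun G Z μ := by
    have h := hIndep.indepFun_finset {0} T hdisj hFmeas
    set g1 : (∀ _ : ({0} : Finset (Fin (M + 1))), ℝ) → ℝ :=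
      fun v => v ⟨0, Finset.mem_singleton_self 0⟩ with hg1
    set g2 : (∀ _ : T, ℝ) → ℝ :=
      fun v => ⨆ m : Fin M, v ⟨m.succ, by
        exact Finset.mem_image_of_mem _ (Finset.mem_univ m)⟩ with hg2
    have mg1 : Measurable g1 := measurable_pi_apply _
    have mg2 : Measurable g2 := Measurable.iSup fun m => measurable_pi_apply _
    have h2 := h.comp mg1 mg2
    have e1 : (g1 ∘ fun a (i : ({0} : Finset (Fin (M + 1)))) => F i a) = G := by
      funext a
      simp [hg1, hF, Function.comp]
    have e2 : (g2 ∘ fun a (i : T) => F i a) = Z := by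
      funext a
      simp only [hg2, hF, Function.comp, Fin.cons_succ]
      exact (hZ a).symm
    rwa [e1, e2] at h2
  -- joint law
  have hpair : Measure.map (fun ω => (G ω, Z ω)) μ = (expMeasure 1).prod ν := by
    rw [(indepFun_iff_map_prod_eq_prod_map_map hGmeas.aemeasurable
      hZmeas.aemeasurable).mp hGZ, hGdist]
  -- tail of Z
  have htail : ∀ t : ℝ, 0 ≤ t →
      ν {z | t < z} = 1 - (ENNReal.ofReal (1 - Real.exp (-t))) ^ M := by
    intro t ht
    have hZle : {ω | Z ω ≤ t} = ⋂ m : Fin M, (H m) ⁻¹' (Set.Iic t) := by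
      ext ω
      simp only [Set.mem_setOf_eq, Set.mem_iInter, Set.mem_preimage, Set.mem_Iic, hZ ω]
      rw [ciSup_le_iff (Set.Finite.bddAbove (Set.finite_range _))]
    have hbiInter : (⋂ i ∈ T, (F i ⁻¹' Set.Iic t)) = ⋂ m : Fin M, (H m) ⁻¹' (Set.Iic t) := by
      ext ω
      simp only [Set.mem_iInter, hT, Finset.mem_image, Set.mem_preimage]
      constructor
      · intro h m
        have := h m.succ ⟨m, Finset.mem_univ m, rfl⟩
        simpa [hF] using this
      · rintro h i ⟨m, -, rfl⟩
        simpa [hF] using h m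
    have hmeasInter := hIndep.meas_biInter (S := T)
      (s := fun i => F i ⁻¹' Set.Iic t)
      (fun i _ => ⟨Set.Iic t, measurableSet_Iic, rfl⟩)
    have hHmeasure : ∀ m : Fin M, μ ((H m) ⁻¹' Set.Iic t)
        = ENNReal.ofReal (1 - Real.exp (-t)) := by
      intro m
      rw [← Measure.map_apply (hHmeas m) measurableSet_Iic, hHdist m,
        expMeasure_Iic, if_pos ht]
    have hprodT : ∏ i ∈ T, μ (F i ⁻¹' Set.Iic t)
        = (ENNReal.ofReal (1 - Real.exp (-t))) ^ M := by
      rw [hT, Finset.prod_image (fun x _ y _ h => Fin.succ_injective M h)]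
      have : ∀ m : Fin M, μ (F m.succ ⁻¹' Set.Iic t)
          = ENNReal.ofReal (1 - Real.exp (-t)) := by
        intro m
        have : F m.succ = H m := by simp [hF]
        rw [this, hHmeasure m]
      rw [Finset.prod_congr rfl fun m _ => this m, Finset.prod_const,
        Finset.card_univ, Fintype.card_fin]
    have hZleMeas : μ {ω | Z ω ≤ t} = (ENNReal.ofReal (1 - Real.exp (-t))) ^ M := by
      rw [hZle, ← hbiInter, hmeasInter, hprodT]
    have hcompl : {z : ℝ | t < z} = (Set.Iic t)ᶜ := by
      ext z
      simp only [Set.mem_compl_iff, Set.mem_Iic, Set.mem_setOf_eq, not_le]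
    rw [hcompl, measure_compl measurableSet_Iic (measure_ne_top _ _)]
    have : ν (Set.Iic t) = μ {ω | Z ω ≤ t} := by
      rw [hν, Measure.map_apply hZmeas measurableSet_Iic]
      rfl
    rw [measure_univ, this, hZleMeas]
  -- probability as lintegral
  have hμE : μ {ω | Ps * Z ω > tau α0 (G ω) ∧
      Real.logb 2 (1 + tau α0 (G ω)) < Rs ∧ G ω > α0}
      = ∫⁻ g, ν (Prod.mk g ⁻¹' S) ∂(expMeasure 1) := by
    rw [hsetEq, ← Measure.map_apply (hGmeas.prodMk hZmeas) hSmeas, hpair,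
      Measure.prod_apply hSmeas]
  rw [hμE]
  -- toReal and sections
  rw [← integral_toReal (measurable_measure_prodMk_left hSmeas).aemeasurable
    (ae_of_all _ fun x => measure_lt_top ν _)]
  set φ : ℝ → ℝ := fun g => (g / α0 - 1) / Ps with hφ
  set Fn : ℝ → ℝ := fun g => 1 - (1 - Real.exp (-(φ g))) ^ M with hFn
  have hsection : ∀ g : ℝ, (ν (Prod.mk g ⁻¹' S)).toReal
      = Set.indicator (Set.Ioo α0 α1) Fn g := by
    intro g
    by_cases hg : g ∈ Set.Ioo α0 α1
    · have hpre : Prod.mk g ⁻¹' S = {z | φ g < z} := by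
        ext z
        simp [hS, hφ, hg.1, hg.2]
      have hφnn : 0 ≤ φ g := by
        have h1 : 1 < g / α0 := (one_lt_div hα0pos).mpr hg.1
        simp only [hφ]
        exact div_nonneg (by linarith) hPs.le
      rw [hpre, htail _ hφnn, Set.indicator_of_mem hg, hFn]
      have hle1 : ENNReal.ofReal (1 - Real.exp (-(φ g))) ≤ 1 := by
        apply ENNReal.ofReal_le_one.mpr
        have := Real.exp_pos (-(φ g))
        linarith
      have hpowle : (ENNReal.ofReal (1 - Real.exp (-(φ g)))) ^ M ≤ 1 := by
        calc (ENNReal.ofReal (1 - Real.exp (-(φ g)))) ^ M ≤ 1 ^ M :=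
          pow_le_pow_left' hle1 M
        _ = 1 := one_pow M
      rw [ENNReal.toReal_sub_of_le hpowle ENNReal.one_ne_top, ENNReal.toReal_pow,
        ENNReal.toReal_ofReal (by
          have : Real.exp (-(φ g)) ≤ 1 := Real.exp_le_one_iff.mpr (by linarith)
          linarith), ENNReal.toReal_one]
    · have hpre : Prod.mk g ⁻¹' S = ∅ := by
        ext z
        simp only [Set.mem_preimage, hS, Set.mem_setOf_eq, Set.mem_empty_iff_false, iff_false]
        rintro ⟨⟨h1, h2⟩, -⟩
        exact hg ⟨h1, h2⟩
      rw [hpre, measure_empty, Set.indicator_of_notMem hg]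
      simp
  rw [integral_congr_ae (ae_of_all _ hsection)]
  -- from expMeasure to Lebesgue
  have hexp : expMeasure 1
      = volume.withDensity (fun x => ((exponentialPDFReal 1 x).toNNReal : ENNReal)) := rfl
  rw [hexp, integral_withDensity_eq_integral_smul
    ((measurable_exponentialPDFReal 1).real_toNNReal) _]
  have hptwise : (fun x => (exponentialPDFReal 1 x).toNNReal
      • Set.indicator (Set.Ioo α0 α1) Fn x)
      = Set.indicator (Set.Ioo α0 α1) (fun x => Real.exp (-x) * Fn x) := by
    funext x
    by_cases hx : x ∈ Set.Ioo α0 α1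
    · rw [Set.indicator_of_mem hx, Set.indicator_of_mem hx, NNReal.smul_def,
        Real.coe_toNNReal _ (exponentialPDFReal_nonneg one_pos x),
        exponentialPDFReal_one_of_nonneg (le_of_lt (lt_trans hα0pos hx.1)),
        smul_eq_mul]
    · rw [Set.indicator_of_notMem hx, Set.indicator_of_notMem hx, smul_zero]
  rw [hptwise, integral_indicator measurableSet_Ioo, ← integral_Ioc_eq_integral_Ioo,
    ← intervalIntegral.integral_of_le (le_of_lt hα01)]
  -- now a concrete interval integral
  have hintegrand : ∀ x : ℝ, Real.exp (-x) * Fn x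
      = Real.exp (-x) - ∑ i ∈ Finset.range (M + 1),
          ((M.choose i : ℝ) * (-1 : ℝ) ^ i * Real.exp ((i : ℝ) / Ps))
            * Real.exp (-(((i : ℝ) / (Ps * α0) + 1) * x)) := by
    intro x
    have hFnx : Fn x = 1 - (1 - Real.exp (-(φ x))) ^ M := rfl
    rw [hFnx, one_sub_pow_eq (Real.exp (-(φ x))) M, mul_sub, mul_one, Finset.mul_sum]
    congr 1
    refine Finset.sum_congr rfl fun i _ => ?_
    have hpow : Real.exp (-(φ x)) ^ i = Real.exp ((i : ℝ) * -(φ x)) := by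
      rw [← Real.exp_nat_mul]
    have key : Real.exp (-x) * Real.exp ((i : ℝ) * -(φ x))
        = Real.exp ((i : ℝ) / Ps) * Real.exp (-(((i : ℝ) / (Ps * α0) + 1) * x)) := by
      rw [← Real.exp_add, ← Real.exp_add]
      congr 1
      rw [hφ]
      field_simp
      ring
    rw [hpow]
    linear_combination ((M.choose i : ℝ) * (-1 : ℝ) ^ i) * key
  rw [intervalIntegral.integral_congr (g := fun x =>
      Real.exp (-x) - ∑ i ∈ Finset.range (M + 1),
        ((M.choose i : ℝ) * (-1 : ℝ) ^ i * Real.exp ((i : ℝ) / Ps))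
          * Real.exp (-(((i : ℝ) / (Ps * α0) + 1) * x)))
    (fun x _ => hintegrand x)]
  have hcont : ∀ i : ℕ, Continuous (fun x : ℝ =>
      ((M.choose i : ℝ) * (-1 : ℝ) ^ i * Real.exp ((i : ℝ) / Ps))
        * Real.exp (-(((i : ℝ) / (Ps * α0) + 1) * x))) := by
    intro i
    exact continuous_const.mul (Real.continuous_exp.comp
      ((continuous_const.mul continuous_id).neg))
  have hint1 : IntervalIntegrable (fun x => Real.exp (-x)) volume α0 α1 :=
    (Real.continuous_exp.comp continuous_neg).intervalIntegrable _ _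
  have hint2 : IntervalIntegrable (fun x => ∑ i ∈ Finset.range (M + 1),
      ((M.choose i : ℝ) * (-1 : ℝ) ^ i * Real.exp ((i : ℝ) / Ps))
        * Real.exp (-(((i : ℝ) / (Ps * α0) + 1) * x))) volume α0 α1 := by
    apply Continuous.intervalIntegrable
    exact continuous_finset_sum _ fun i _ => hcont i
  rw [intervalIntegral.integral_sub hint1 hint2]
  have hA : ∫ x in α0..α1, Real.exp (-x) = Real.exp (-α0) - Real.exp (-α1) := by
    have := integral_exp_neg_mul 1 α0 α1 one_pos
    simpa using this
  rw [hA, intervalIntegral.integral_finset_sum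
    (fun i _ => (hcont i).intervalIntegrable _ _)]
  congr 1
  refine Finset.sum_congr rfl fun i _ => ?_
  have hkpos : 0 < (i : ℝ) / (Ps * α0) + 1 := by positivity
  rw [intervalIntegral.integral_const_mul, integral_exp_neg_mul _ _ _ hkpos]
  have huF : uFun α0 α1 ((i : ℝ) / (Ps * α0))
      = (Real.exp (-(((i : ℝ) / (Ps * α0) + 1) * α0))
          - Real.exp (-(((i : ℝ) / (Ps * α0) + 1) * α1))) / ((i : ℝ) / (Ps * α0) + 1) := by
    unfold uFun
    rw [show -α0 * ((i : ℝ) / (Ps * α0) + 1) = -(((i : ℝ) / (Ps * α0) + 1) * α0) by ring,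
      show -α1 * ((i : ℝ) / (Ps * α0) + 1) = -(((i : ℝ) / (Ps * α0) + 1) * α1) by ring]
  rw [huF]
  try ring
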